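/- Let w = x^{a₁}y^{b₁}⋯x^{a_l}y^{b_l} with all a_i, b_i nonzero and let q be a power of a prime p with p ∤ a_i b_i for all i. Then for every t ∈ F_q there exists m ≤ l and unipotent matrices g, h ∈ SL₂(F_{q^m}) such that tr(w(g,h)) = t. -/

import Mathlib

open Matrix Polynomial

/-- Evaluation of the word `w = x^{a₁}y^{b₁}⋯x^{a_l}y^{b_l}` at a pair of group
elements. -/
def wordEval {G : Type*} [Group G] {l : ℕ} (a b : Fin l → ℤ) (g h : G) : G :=
  (List.ofFn fun i : Fin l => g ^ a i * h ^ b i).prod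

lemma wordEval_map {G H : Type*} [Group G] [Group H] (φ : G →* H) {l : ℕ}
    (a b : Fin l → ℤ) (g h : G) :
    φ (wordEval a b g h) = wordEval a b (φ g) (φ h) := by
  unfold wordEval
  rw [map_list_prod, List.map_ofFn]
  refine congrArg List.prod (congrArg List.ofFn ?_)
  funext i
  simp [map_zpow]

section Mats

variable {R : Type*} [CommRing R]

/-- Upper unitriangular element of `SL₂`. -/
def Umat (x : R) : Matrix.SpecialLinearGroup (Fin 2) R :=
  ⟨!![1, x; 0, 1], by simp [Matrix.det_fin_two_of]⟩

/-- Lower unitriangular element of `SL₂`. -/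
def Lmat (x : R) : Matrix.SpecialLinearGroup (Fin 2) R :=
  ⟨!![1, 0; x, 1], by simp [Matrix.det_fin_two_of]⟩

lemma Umat_mul (x y : R) : Umat x * Umat y = Umat (x + y) := by
  ext i j
  rw [Matrix.SpecialLinearGroup.coe_mul]
  fin_cases i <;> fin_cases j <;>
    simp [Umat, Matrix.SpecialLinearGroup.coe_mul, Matrix.mul_fin_two] <;> ring

lemma Umat_zero : (Umat 0 : Matrix.SpecialLinearGroup (Fin 2) R) = 1 := by
  ext i j
  fin_cases i <;> fin_cases j <;> simp [Umat]

lemma Umat_zpow (x : R) (n : ℤ) : (Umat x) ^ n = Umat (n • x) := by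
  induction n using Int.induction_on with
  | zero => simpa using Umat_zero.symm
  | succ n ih =>
      rw [_root_.zpow_add_one, ih, Umat_mul]
      congr 1
      push_cast [zsmul_eq_mul]
      ring
  | pred n ih =>
      rw [_root_.zpow_sub_one, ih,
        inv_eq_of_mul_eq_one_right (by rw [Umat_mul, add_neg_cancel, Umat_zero] :
          Umat x * Umat (-x) = 1),
        Umat_mul]
      congr 1
      push_cast [zsmul_eq_mul]
      ring

lemma Lmat_mul (x y : R) : Lmat x * Lmat y = Lmat (x + y) := by
  ext i j
  rw [Matrix.SpecialLinearGroup.coe_mul]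
  fin_cases i <;> fin_cases j <;>
    simp [Lmat, Matrix.SpecialLinearGroup.coe_mul, Matrix.mul_fin_two] <;> ring

lemma Lmat_zero : (Lmat 0 : Matrix.SpecialLinearGroup (Fin 2) R) = 1 := by
  ext i j
  fin_cases i <;> fin_cases j <;> simp [Lmat]

lemma Lmat_zpow (x : R) (n : ℤ) : (Lmat x) ^ n = Lmat (n • x) := by
  induction n using Int.induction_on with
  | zero => simpa using Lmat_zero.symm
  | succ n ih =>
      rw [_root_.zpow_add_one, ih, Lmat_mul]
      congr 1
      push_cast [zsmul_eq_mul]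
      ring
  | pred n ih =>
      rw [_root_.zpow_sub_one, ih,
        inv_eq_of_mul_eq_one_right (by rw [Lmat_mul, add_neg_cancel, Lmat_zero] :
          Lmat x * Lmat (-x) = 1),
        Lmat_mul]
      congr 1
      push_cast [zsmul_eq_mul]
      ring

/-- The coercion `SL₂ R → Matrix` as a monoid hom. -/
def coeHom : Matrix.SpecialLinearGroup (Fin 2) R →* Matrix (Fin 2) (Fin 2) R where
  toFun g := ↑g
  map_one' := by simp
  map_mul' a b := by simp

@[simp] lemma coeHom_apply (g : Matrix.SpecialLinearGroup (Fin 2) R) :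
    coeHom g = ↑g := rfl

lemma Umat_unipotent (x : R) :
    (((Umat x : Matrix.SpecialLinearGroup (Fin 2) R) : Matrix (Fin 2) (Fin 2) R) - 1) ^ 2 = 0 := by
  have h : ((Umat x : Matrix.SpecialLinearGroup (Fin 2) R) : Matrix (Fin 2) (Fin 2) R) - 1 =
      !![0, x; 0, 0] := by
    ext i j
    fin_cases i <;> fin_cases j <;> simp [Umat, Matrix.one_fin_two]
  rw [h, sq, Matrix.mul_fin_two]
  ext i j
  fin_cases i <;> fin_cases j <;> simp

lemma Lmat_unipotent (x : R) :
    (((Lmat x : Matrix.SpecialLinearGroup (Fin 2) R) : Matrix (Fin 2) (Fin 2) R) - 1) ^ 2 = 0 := by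
  have h : ((Lmat x : Matrix.SpecialLinearGroup (Fin 2) R) : Matrix (Fin 2) (Fin 2) R) - 1 =
      !![0, 0; x, 0] := by
    ext i j
    fin_cases i <;> fin_cases j <;> simp [Lmat, Matrix.one_fin_two]
  rw [h, sq, Matrix.mul_fin_two]
  ext i j
  fin_cases i <;> fin_cases j <;> simp

end Mats

section Poly

variable {F : Type*} [Field F]

/-- The matrix of one word factor, with entries in `F[X]`. -/
noncomputable def Mm (q : F × F) : Matrix (Fin 2) (Fin 2) F[X] :=
  !![1 + C (q.1 * q.2) * X, C q.1; C q.2 * X, 1]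

lemma Mm00 (q : F × F) : Mm q 0 0 = 1 + C (q.1 * q.2) * X := by simp [Mm]
lemma Mm01 (q : F × F) : Mm q 0 1 = C q.1 := by simp [Mm]
lemma Mm10 (q : F × F) : Mm q 1 0 = C q.2 * X := by simp [Mm]
lemma Mm11 (q : F × F) : Mm q 1 1 = 1 := by simp [Mm]

/-- Product of the word-factor matrices along a list. -/
noncomputable def Pl (s : List (F × F)) : Matrix (Fin 2) (Fin 2) F[X] :=
  (s.map Mm).prod

lemma Pl_cons (q : F × F) (s : List (F × F)) : Pl (q :: s) = Mm q * Pl s := by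
  simp [Pl]

lemma mul_entry (A B : Matrix (Fin 2) (Fin 2) F[X]) (i j : Fin 2) :
    (A * B) i j = A i 0 * B 0 j + A i 1 * B 1 j := by
  simp [Matrix.mul_apply, Fin.sum_univ_two]

lemma deg_headline (c : F) : (1 + C c * X).degree ≤ 1 := by
  refine (degree_add_le _ _).trans (max_le (degree_one_le.trans ?_) ((degree_mul_le _ _).trans ?_))
  · norm_num
  · simpa using add_le_add degree_C_le (le_refl (degree (X : F[X])))

lemma deg_CX_le (c : F) : (C c * X : F[X]).degree ≤ 1 := by
  refine (degree_mul_le _ _).trans ?_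
  simpa using add_le_add degree_C_le (le_refl (degree (X : F[X])))

lemma key_inv (s : List (F × F)) : ∀ q : F × F,
    (Pl (q :: s) 0 0).degree ≤ (s.length + 1 : ℕ) ∧
    (Pl (q :: s) 0 0).coeff (s.length + 1) = ((q :: s).map fun r => r.1 * r.2).prod ∧
    (Pl (q :: s) 0 1).degree < (s.length + 1 : ℕ) ∧
    (Pl (q :: s) 1 0).degree ≤ (s.length + 1 : ℕ) ∧
    (Pl (q :: s) 1 1).degree < (s.length + 1 : ℕ) := by
  induction s with
  | nil =>
      intro q
      have h1 : Pl [q] = Mm q := by simp [Pl]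
      rw [h1]
      refine ⟨?_, ?_, ?_, ?_, ?_⟩
      · rw [Mm00]; exact_mod_cast deg_headline _
      · rw [Mm00]; simp [coeff_add, coeff_one, coeff_C_mul]
      · rw [Mm01]
        exact lt_of_le_of_lt degree_C_le (by norm_num)
      · rw [Mm10]; exact_mod_cast deg_CX_le _
      · rw [Mm11]
        exact lt_of_le_of_lt degree_one_le (by norm_num)
  | cons q' s ih =>
      intro q
      obtain ⟨h00, hc, h01, h10, h11⟩ := ih q'
      set N := Pl (q' :: s) with hN
      set k : ℕ := s.length + 1 with hk
      have hlen : ((q' :: s).length + 1 : ℕ) = k + 1 := by simp [hk]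
      rw [Pl_cons]
      have e00 : (Mm q * N) 0 0 = (1 + C (q.1 * q.2) * X) * N 0 0 + C q.1 * N 1 0 := by
        rw [mul_entry, Mm00, Mm01]
      have e01 : (Mm q * N) 0 1 = (1 + C (q.1 * q.2) * X) * N 0 1 + C q.1 * N 1 1 := by
        rw [mul_entry, Mm00, Mm01]
      have e10 : (Mm q * N) 1 0 = C q.2 * X * N 0 0 + N 1 0 := by
        rw [mul_entry, Mm10, Mm11, one_mul]
      have e11 : (Mm q * N) 1 1 = C q.2 * X * N 0 1 + N 1 1 := by
        rw [mul_entry, Mm10, Mm11, one_mul]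
      have hcast : ((k + 1 : ℕ) : WithBot ℕ) = 1 + (k : WithBot ℕ) := by
        push_cast; ring
      have mul_le : ∀ (P Q : F[X]), P.degree ≤ 1 → Q.degree ≤ (k : WithBot ℕ) →
          (P * Q).degree ≤ ((k + 1 : ℕ) : WithBot ℕ) := by
        intro P Q hP hQ
        rw [hcast]
        exact (degree_mul_le _ _).trans (add_le_add hP hQ)
      have mul_lt : ∀ (P Q : F[X]), P.degree ≤ 1 → Q.degree < (k : WithBot ℕ) →
          (P * Q).degree < ((k + 1 : ℕ) : WithBot ℕ) := by
        intro P Q hP hQ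
        rw [hcast]
        calc (P * Q).degree ≤ P.degree + Q.degree := degree_mul_le _ _
          _ ≤ 1 + Q.degree := add_le_add_left hP _
          _ < 1 + (k : WithBot ℕ) := WithBot.add_lt_add_left (by simp) hQ
      have hkk1 : ((k : ℕ) : WithBot ℕ) < ((k + 1 : ℕ) : WithBot ℕ) := by
        exact_mod_cast Nat.lt_succ_self k
      rw [hlen]
      refine ⟨?_, ?_, ?_, ?_, ?_⟩
      · rw [e00]
        refine (degree_add_le _ _).trans (max_le (mul_le _ _ (deg_headline _) h00) ?_)
        calc (C q.1 * N 1 0).degree ≤ (C q.1).degree + (N 1 0).degree := degree_mul_le _ _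
          _ ≤ 0 + (k : WithBot ℕ) := add_le_add degree_C_le h10
          _ ≤ ((k + 1 : ℕ) : WithBot ℕ) := by rw [zero_add]; exact hkk1.le
      · rw [e00, coeff_add]
        have hz : (C q.1 * N 1 0).coeff (k + 1) = 0 := by
          rw [coeff_C_mul]
          rw [coeff_eq_zero_of_degree_lt (lt_of_le_of_lt h10 hkk1), mul_zero]
        rw [hz, add_zero, add_mul, one_mul, coeff_add,
          coeff_eq_zero_of_degree_lt (lt_of_le_of_lt h00 hkk1), zero_add]
        have : C (q.1 * q.2) * X * N 0 0 = C (q.1 * q.2) * (N 0 0 * X) := by ring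
        rw [this, coeff_C_mul, coeff_mul_X, hc]
        simp [hk]
      · rw [e01]
        refine lt_of_le_of_lt (degree_add_le _ _) (max_lt (mul_lt _ _ (deg_headline _) h01) ?_)
        calc (C q.1 * N 1 1).degree ≤ (C q.1).degree + (N 1 1).degree := degree_mul_le _ _
          _ ≤ 0 + (N 1 1).degree := add_le_add_left degree_C_le _
          _ = (N 1 1).degree := zero_add _
          _ < (k : WithBot ℕ) := h11
          _ < _ := hkk1
      · rw [e10]
        exact (degree_add_le _ _).trans
          (max_le (mul_le _ _ (deg_CX_le _) h00) (h10.trans hkk1.le))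
      · rw [e11]
        exact lt_of_le_of_lt (degree_add_le _ _)
          (max_lt (mul_lt _ _ (deg_CX_le _) h01) (h11.trans hkk1))

/-- Single factor of the word, coerced to a matrix over `F[X]`. -/
lemma factor_coe (n m : ℤ) :
    ((Umat (1 : F[X]) ^ n * Lmat (X : F[X]) ^ m :
        Matrix.SpecialLinearGroup (Fin 2) F[X]) : Matrix (Fin 2) (Fin 2) F[X]) =
      Mm (((n : F), (m : F)) : F × F) := by
  rw [Umat_zpow, Lmat_zpow]
  have h1 : (n • (1 : F[X])) = ((n : F[X])) := by simp [zsmul_eq_mul]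
  have h2 : (m • (X : F[X])) = (m : F[X]) * X := by simp [zsmul_eq_mul]
  rw [h1, h2]
  rw [Matrix.SpecialLinearGroup.coe_mul]
  show (!![1, (n : F[X]); 0, 1] : Matrix (Fin 2) (Fin 2) F[X]) *
      !![1, 0; (m : F[X]) * X, 1] = _
  rw [Matrix.mul_fin_two]
  have hC : (C ((n : F) * (m : F)) : F[X]) = (n : F[X]) * (m : F[X]) := by
    rw [_root_.map_mul, map_intCast, map_intCast]
  have hCn : (C ((n : F)) : F[X]) = (n : F[X]) := map_intCast _ _
  show _ = !![1 + C ((n : F) * (m : F)) * X, C ((n : F)); C ((m : F)) * X, 1]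
  rw [hC, hCn, map_intCast]
  congr 1 <;> funext j <;> fin_cases j <;> simp <;> ring

lemma word_coe {l : ℕ} (a b : Fin l → ℤ) :
    ((wordEval a b (Umat (1 : F[X])) (Lmat (X : F[X])) :
        Matrix.SpecialLinearGroup (Fin 2) F[X]) : Matrix (Fin 2) (Fin 2) F[X]) =
      Pl (List.ofFn fun i => (((a i : F), (b i : F)) : F × F)) := by
  unfold wordEval Pl
  rw [← coeHom_apply, map_list_prod, List.map_ofFn, List.map_ofFn]
  refine congrArg List.prod (congrArg List.ofFn ?_)
  funext i
  simp only [Function.comp_apply, coeHom_apply]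
  exact factor_coe (a i) (b i)

end Poly

/-- Let `w = x^{a₁}y^{b₁}⋯x^{a_l}y^{b_l}` with all `aᵢ, bᵢ` nonzero, and
let `F = F_q` have characteristic `p` with `p ∤ aᵢbᵢ`. Then for every `t ∈ F_q` there
is `m ≤ l` and unipotent `g, h ∈ SL₂(F_{q^m})` with `tr (w(g,h)) = t`. -/
theorem trace_word_map_effectively_surjective
    (l : ℕ) (hl : 0 < l) (a b : Fin l → ℤ) (ha : ∀ i, a i ≠ 0) (hb : ∀ i, b i ≠ 0)
    (F : Type) [Field F] [Fintype F] (p : ℕ) (hp : p.Prime) [CharP F p]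
    (hpa : ∀ i, ¬ (p : ℤ) ∣ a i) (hpb : ∀ i, ¬ (p : ℤ) ∣ b i)
    (t : F) :
    ∃ (m : ℕ), m ≤ l ∧ ∃ (E : Type) (_ : Field E) (_ : Algebra F E),
      Module.finrank F E = m ∧
      ∃ g h : Matrix.SpecialLinearGroup (Fin 2) E,
        ((g : Matrix (Fin 2) (Fin 2) E) - 1) ^ 2 = 0 ∧
        ((h : Matrix (Fin 2) (Fin 2) E) - 1) ^ 2 = 0 ∧
        ((wordEval a b g h : Matrix.SpecialLinearGroup (Fin 2) E) :
            Matrix (Fin 2) (Fin 2) E).trace = algebraMap F E t := by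
  classical
  -- the list of coefficient pairs
  obtain ⟨l', rfl⟩ : ∃ l', l = l' + 1 := ⟨l - 1, (Nat.succ_pred_eq_of_pos hl).symm⟩
  set φ : Fin (l' + 1) → F × F := fun i => ((a i : F), (b i : F)) with hφ
  set s : List (F × F) := List.ofFn (fun i => φ i.succ) with hs
  have hsplit : List.ofFn φ = φ 0 :: s := List.ofFn_succ
  have hslen : s.length = l' := by simp [hs]
  -- the trace polynomial
  set W : Matrix (Fin 2) (Fin 2) F[X] := Pl (List.ofFn φ) with hW
  obtain ⟨h00, hcoeff, _, _, h11⟩ := by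
    have := key_inv (F := F) s (φ 0)
    rwa [← hsplit, hslen] at this
  set T : F[X] := W.trace with hT
  have hTdef : T = Pl (List.ofFn φ) 0 0 + Pl (List.ofFn φ) 1 1 := by
    rw [hT, hW, Matrix.trace_fin_two]
  -- coefficient of degree l'+1 in T is the product of all aᵢbᵢ, nonzero
  have hprod : ((List.ofFn φ).map fun r => r.1 * r.2).prod =
      ∏ i : Fin (l' + 1), ((a i : F) * (b i : F)) := by
    rw [List.map_ofFn, List.prod_ofFn]
    rfl
  have hprod_ne : (∏ i : Fin (l' + 1), ((a i : F) * (b i : F))) ≠ 0 := by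
    rw [Finset.prod_ne_zero_iff]
    intro i _
    have h1 : (a i : F) ≠ 0 := by
      rw [Ne, CharP.intCast_eq_zero_iff F p]
      exact hpa i
    have h2 : (b i : F) ≠ 0 := by
      rw [Ne, CharP.intCast_eq_zero_iff F p]
      exact hpb i
    exact mul_ne_zero h1 h2
  have hTcoeff : T.coeff (l' + 1) = ∏ i : Fin (l' + 1), ((a i : F) * (b i : F)) := by
    rw [hTdef, coeff_add, hcoeff,
      coeff_eq_zero_of_degree_lt h11, add_zero, hprod]
  have hTdeg : T.degree ≤ (l' + 1 : ℕ) := by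
    rw [hTdef]
    exact (degree_add_le _ _).trans (max_le h00 h11.le)
  -- the shifted polynomial and its irreducible factor
  set P : F[X] := T - C t with hP
  have hPcoeff : P.coeff (l' + 1) ≠ 0 := by
    rw [hP, coeff_sub, coeff_C, if_neg (Nat.succ_ne_zero l'), sub_zero, hTcoeff]
    exact hprod_ne
  have hPne : P ≠ 0 := fun h => hPcoeff (by simp [h])
  have hPdeg : P.degree ≤ (l' + 1 : ℕ) := by
    rw [hP]
    refine (degree_sub_le _ _).trans (max_le hTdeg ?_)
    exact degree_C_le.trans (by exact_mod_cast Nat.zero_le _)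
  have hPnatdeg : P.natDegree ≤ l' + 1 := natDegree_le_iff_degree_le.2 hPdeg
  have hPnatdeg_ge : l' + 1 ≤ P.natDegree := le_natDegree_of_ne_zero hPcoeff
  have hPnotunit : ¬ IsUnit P :=
    Polynomial.not_isUnit_of_natDegree_pos P (lt_of_lt_of_le l'.succ_pos hPnatdeg_ge)
  obtain ⟨f, hf_irr, hf_dvd⟩ := WfDvdMonoid.exists_irreducible_factor hPnotunit hPne
  have hf_ne : f ≠ 0 := hf_irr.ne_zero
  have hfdeg : f.natDegree ≤ l' + 1 :=
    (Polynomial.natDegree_le_of_dvd hf_dvd hPne).trans hPnatdeg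
  -- the extension field
  haveI : Fact (Irreducible f) := ⟨hf_irr⟩
  refine ⟨f.natDegree, hfdeg, AdjoinRoot f, AdjoinRoot.instField, inferInstance, ?_, ?_⟩
  · rw [(AdjoinRoot.powerBasis hf_ne).finrank, AdjoinRoot.powerBasis_dim]
  · set u : AdjoinRoot f := AdjoinRoot.root f with hu
    refine ⟨Umat 1, Lmat u, Umat_unipotent _, Lmat_unipotent _, ?_⟩
    -- transport the computation along `aeval u`
    set σ : F[X] →+* AdjoinRoot f := (Polynomial.aeval u).toRingHom with hσ
    have hmapU : Matrix.SpecialLinearGroup.map σ (Umat (1 : F[X])) = Umat (1 : AdjoinRoot f) := by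
      ext i j
      rw [Matrix.SpecialLinearGroup.map_apply_coe]
      fin_cases i <;> fin_cases j <;>
        simp [Matrix.SpecialLinearGroup.map_apply_coe, Umat, hσ]
    have hmapL : Matrix.SpecialLinearGroup.map σ (Lmat (X : F[X])) = Lmat u := by
      ext i j
      rw [Matrix.SpecialLinearGroup.map_apply_coe]
      fin_cases i <;> fin_cases j <;>
        simp [Matrix.SpecialLinearGroup.map_apply_coe, Lmat, hσ]
    have hword : wordEval a b (Umat (1 : AdjoinRoot f)) (Lmat u) =
        Matrix.SpecialLinearGroup.map σ (wordEval a b (Umat (1 : F[X])) (Lmat (X : F[X]))) := by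
      rw [wordEval_map, hmapU, hmapL]
    rw [hword]
    have hcoe : ((Matrix.SpecialLinearGroup.map σ
        (wordEval a b (Umat (1 : F[X])) (Lmat (X : F[X]))) :
          Matrix.SpecialLinearGroup (Fin 2) (AdjoinRoot f)) :
          Matrix (Fin 2) (Fin 2) (AdjoinRoot f)) =
        ((wordEval a b (Umat (1 : F[X])) (Lmat (X : F[X])) :
          Matrix.SpecialLinearGroup (Fin 2) F[X]) :
          Matrix (Fin 2) (Fin 2) F[X]).map σ := by
      rw [Matrix.SpecialLinearGroup.map_apply_coe]
      rfl
    rw [hcoe, word_coe a b]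
    have htrace : ((Pl (List.ofFn φ) : Matrix (Fin 2) (Fin 2) F[X]).map σ).trace = σ T := by
      rw [hT, hW]
      simp [Matrix.trace_fin_two, Matrix.map_apply, map_add]
    rw [htrace]
    -- finally `σ T = algebraMap F E t` since `f ∣ T - C t` and `σ f = 0`
    have hPzero : σ P = 0 := by
      rw [hσ]
      show Polynomial.aeval u P = 0
      rw [hu, AdjoinRoot.aeval_eq, AdjoinRoot.mk_eq_zero]
      exact hf_dvd
    have : σ T = σ P + σ (C t) := by
      rw [← map_add, hP]
      ring_nf
    rw [this, hPzero, zero_add, hσ]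
    show Polynomial.aeval u (C t) = _
    rw [aeval_C]
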